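/- For every integer n ≥ 2, (16n(4n+1)/(9(2n+1))) · ( ∫₀^{3/(4n)} (1/(2(4n+1)²)) ((1/2 + n)t + 3/4)² dt + ∫_{3/(4n)}^{3/2} (1/(32(2n-1)²)) (3-2t)² dt ) = (8n²+7n+1)/(8n(2n+1)(4n+1)). -/

import Mathlib

lemma int_sq (c b d a₁ a₂ : ℝ) (hb : b ≠ 0) :
    ∫ t in a₁..a₂, c * (b * t + d) ^ 2
      = c * (b * a₂ + d) ^ 3 / (3 * b) - c * (b * a₁ + d) ^ 3 / (3 * b) := by
  have h : ∀ t : ℝ, HasDerivAt (fun t : ℝ => c * (b * t + d) ^ 3 / (3 * b))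
      (c * (b * t + d) ^ 2) t := by
    intro t
    have h1 : HasDerivAt (fun t : ℝ => b * t + d) b t := by
      simpa using ((hasDerivAt_id t).const_mul b).add_const d
    have h2 := (h1.pow 3).const_mul c
    have h3 := h2.div_const (3 * b)
    refine h3.congr_deriv ?_
    field_simp
    ring
  have hc : IntervalIntegrable (fun t : ℝ => c * (b * t + d) ^ 2)
      MeasureTheory.volume a₁ a₂ :=
    (by fun_prop : Continuous fun t : ℝ => c * (b * t + d) ^ 2).intervalIntegrable a₁ a₂
  exact intervalIntegral.integral_eq_sub_of_hasDerivAt (fun t _ => h t) hc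

theorem stmt_3 (n : ℕ) (hn : 2 ≤ n) :
    (16 * (n : ℝ) * (4 * n + 1) / (9 * (2 * n + 1))) *
      ((∫ t in (0 : ℝ)..(3 / (4 * (n : ℝ))),
          (1 / (2 * (4 * (n : ℝ) + 1) ^ 2)) * ((1 / 2 + n) * t + 3 / 4) ^ 2) +
        ∫ t in (3 / (4 * (n : ℝ)))..(3 / 2),
          (1 / (32 * (2 * (n : ℝ) - 1) ^ 2)) * (3 - 2 * t) ^ 2)
      = (8 * n ^ 2 + 7 * n + 1) / (8 * n * (2 * n + 1) * (4 * n + 1)) := by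
  have hx : (2 : ℝ) ≤ (n : ℝ) := by exact_mod_cast hn
  set x : ℝ := (n : ℝ) with hxdef
  have hx0 : x ≠ 0 := by linarith
  have hb1 : (1 / 2 + x) ≠ 0 := by linarith
  have h21 : 2 * x + 1 ≠ 0 := by linarith
  have h41 : 4 * x + 1 ≠ 0 := by linarith
  have h2m1 : 2 * x - 1 ≠ 0 := by linarith
  have e1 := int_sq (1 / (2 * (4 * x + 1) ^ 2)) (1 / 2 + x) (3 / 4) 0 (3 / (4 * x)) hb1
  have e2 : (∫ t in (3 / (4 * x))..(3 / 2),
      (1 / (32 * (2 * x - 1) ^ 2)) * (3 - 2 * t) ^ 2)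
      = (1 / (32 * (2 * x - 1) ^ 2)) * ((-2) * (3 / 2) + 3) ^ 3 / (3 * (-2))
        - (1 / (32 * (2 * x - 1) ^ 2)) * ((-2) * (3 / (4 * x)) + 3) ^ 3 / (3 * (-2)) := by
    have := int_sq (1 / (32 * (2 * x - 1) ^ 2)) (-2) 3 (3 / (4 * x)) (3 / 2) (by norm_num)
    rw [← this]
    congr 1
    ext t
    ring_nf
  rw [e1, e2]
  have h2m1' : x * 2 - 1 ≠ 0 := by linarith
  field_simp
  ring
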